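/- Let A = [[2, 0], [0, 1]] and C = [[2, 1], [1, 1]] as operators on ℂ², and set K = { x⊗̲y : x, y ∈ ℂ², ‖x‖‖y‖ + ‖Ax‖‖y‖ + ‖Cx‖‖y‖ ≤ 1 }. Then the operator T = (1/8)·I does not belong to the convex hull conv(K). -/

import Mathlib

open scoped InnerProductSpace ComplexConjugate


/-- The rank-one operator `x ⊗̲ y : f ↦ ⟨f,y⟩x` (inner product linear in the first,
conjugate-linear in the second variable). -/
noncomputable def rankOne {H : Type*} [NormedAddCommGroup H] [InnerProductSpace ℂ H]
    (x y : H) : H →L[ℂ] H := (innerSL ℂ y).smulRight x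

/-- The operator on `ℂ²` given by the matrix `[[2, 0], [0, 1]]`. -/
noncomputable def opA : EuclideanSpace ℂ (Fin 2) →L[ℂ] EuclideanSpace ℂ (Fin 2) :=
  Matrix.toEuclideanCLM (𝕜 := ℂ) !![2, 0; 0, 1]

/-- The operator on `ℂ²` given by the matrix `[[2, 1], [1, 1]]`. -/
noncomputable def opC : EuclideanSpace ℂ (Fin 2) →L[ℂ] EuclideanSpace ℂ (Fin 2) :=
  Matrix.toEuclideanCLM (𝕜 := ℂ) !![2, 1; 1, 1]

lemma opA_apply (x : EuclideanSpace ℂ (Fin 2)) :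
    opA x 0 = 2 * x 0 ∧ opA x 1 = x 1 := by
  have : opA x = (WithLp.equiv 2 _).symm
      (Matrix.toLin' !![(2:ℂ), 0; 0, 1] (WithLp.equiv 2 _ x)) := rfl
  rw [this]
  constructor <;> simp [Matrix.mulVec, dotProduct, Fin.sum_univ_two, Matrix.vecHead, Matrix.vecTail]

lemma opC_apply (x : EuclideanSpace ℂ (Fin 2)) :
    opC x 0 = 2 * x 0 + x 1 ∧ opC x 1 = x 0 + x 1 := by
  have : opC x = (WithLp.equiv 2 _).symm
      (Matrix.toLin' !![(2:ℂ), 1; 1, 1] (WithLp.equiv 2 _ x)) := rfl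
  rw [this]
  constructor <;> simp [Matrix.mulVec, dotProduct, Fin.sum_univ_two, Matrix.vecHead, Matrix.vecTail]

-- helper: real part equality case of Cauchy-Schwarz
lemma cs_eq {E : Type*} [NormedAddCommGroup E] [InnerProductSpace ℂ E] (u v : E)
    (h : Complex.re ⟪u, v⟫_ℂ = ‖u‖ * ‖v‖) : (‖v‖ : ℂ) • u = (‖u‖ : ℂ) • v := by
  have habs : ‖⟪u, v⟫_ℂ‖ ≤ ‖u‖ * ‖v‖ := norm_inner_le_norm u v
  have hsq : (⟪u, v⟫_ℂ).re ^ 2 + (⟪u, v⟫_ℂ).im ^ 2 = ‖⟪u, v⟫_ℂ‖ ^ 2 := by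
    rw [Complex.sq_norm, Complex.normSq_apply]; ring
  have hnn : 0 ≤ ‖u‖ * ‖v‖ := by positivity
  have him : (⟪u, v⟫_ℂ).im = 0 := by nlinarith [norm_nonneg (⟪u, v⟫_ℂ)]
  have : ⟪u, v⟫_ℂ = ((‖u‖ * ‖v‖ : ℝ) : ℂ) := by
    apply Complex.ext <;> simp [him, h]
  exact inner_eq_norm_mul_iff.mp (by rw [this]; push_cast; rfl)

/-- the separating functional -/
noncomputable def phi (S : EuclideanSpace ℂ (Fin 2) →L[ℂ] EuclideanSpace ℂ (Fin 2)) : ℝ :=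
  (5 * S (EuclideanSpace.single 0 1) 0 + S (EuclideanSpace.single 0 1) 1
    + S (EuclideanSpace.single 1 1) 0 + 3 * S (EuclideanSpace.single 1 1) 1).re

lemma phi_linear : IsLinearMap ℝ phi := by
  constructor
  · intro S S'
    simp [phi]; ring
  · intro r S
    simp [phi, Complex.real_smul]; ring

lemma phi_T : phi ((1 / 8 : ℂ) • (1 : EuclideanSpace ℂ (Fin 2) →L[ℂ] EuclideanSpace ℂ (Fin 2))) = 1 := by
  simp [phi, EuclideanSpace.single_apply]
  norm_num

lemma phi_rankOne (x y : EuclideanSpace ℂ (Fin 2)) :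
    phi (rankOne x y) =
      Complex.re ⟪y, x⟫_ℂ + Complex.re ⟪y, opA x⟫_ℂ + Complex.re ⟪y, opC x⟫_ℂ := by
  have hA0 := (opA_apply x).1; have hA1 := (opA_apply x).2
  have hC0 := (opC_apply x).1; have hC1 := (opC_apply x).2
  have key : (5 * rankOne x y (EuclideanSpace.single 0 1) 0
      + rankOne x y (EuclideanSpace.single 0 1) 1
      + rankOne x y (EuclideanSpace.single 1 1) 0
      + 3 * rankOne x y (EuclideanSpace.single 1 1) 1)
      = ⟪y, x⟫_ℂ + ⟪y, opA x⟫_ℂ + ⟪y, opC x⟫_ℂ := by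
    simp [rankOne, PiLp.inner_apply, Fin.sum_univ_two, EuclideanSpace.single_apply,
      hA0, hA1, hC0, hC1]
    ring
  simp only [phi, key, Complex.add_re]

lemma key_strict (x y : EuclideanSpace ℂ (Fin 2))
    (h : ‖x‖ * ‖y‖ + ‖opA x‖ * ‖y‖ + ‖opC x‖ * ‖y‖ ≤ 1) :
    Complex.re ⟪y, x⟫_ℂ + Complex.re ⟪y, opA x⟫_ℂ + Complex.re ⟪y, opC x⟫_ℂ < 1 := by
  have h1 : Complex.re ⟪y, x⟫_ℂ ≤ ‖y‖ * ‖x‖ := re_inner_le_norm (𝕜 := ℂ) y x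
  have h2 : Complex.re ⟪y, opA x⟫_ℂ ≤ ‖y‖ * ‖opA x‖ := re_inner_le_norm (𝕜 := ℂ) y (opA x)
  have h3 : Complex.re ⟪y, opC x⟫_ℂ ≤ ‖y‖ * ‖opC x‖ := re_inner_le_norm (𝕜 := ℂ) y (opC x)
  rw [mul_comm] at h1 h2 h3
  by_contra hlt
  push_neg at hlt
  -- equalities
  have e1 : Complex.re ⟪y, x⟫_ℂ = ‖x‖ * ‖y‖ := by linarith
  have e2 : Complex.re ⟪y, opA x⟫_ℂ = ‖opA x‖ * ‖y‖ := by linarith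
  have e3 : Complex.re ⟪y, opC x⟫_ℂ = ‖opC x‖ * ‖y‖ := by linarith
  -- nonzero
  have hy : y ≠ 0 := by
    rintro rfl; simp at hlt; linarith
  have hx : x ≠ 0 := by
    rintro rfl; simp at hlt; linarith
  have hny : (0:ℝ) < ‖y‖ := norm_pos_iff.mpr hy
  have hnx : (0:ℝ) < ‖x‖ := norm_pos_iff.mpr hx
  -- Cauchy-Schwarz equality cases
  have E1 := cs_eq y x (by rw [e1]; ring)
  have E2 := cs_eq y (opA x) (by rw [e2]; ring)
  have E3 := cs_eq y (opC x) (by rw [e3]; ring)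
  have Ex0 := congrFun (congrArg (WithLp.equiv 2 _) E1) 0
  have Ex1 := congrFun (congrArg (WithLp.equiv 2 _) E1) 1
  have Ea0 := congrFun (congrArg (WithLp.equiv 2 _) E2) 0
  have Ea1 := congrFun (congrArg (WithLp.equiv 2 _) E2) 1
  have Ec0 := congrFun (congrArg (WithLp.equiv 2 _) E3) 0
  have Ec1 := congrFun (congrArg (WithLp.equiv 2 _) E3) 1
  simp only [WithLp.equiv_apply, WithLp.ofLp_smul, Pi.smul_apply, PiLp.smul_apply, smul_eq_mul,
    (opA_apply x).1, (opA_apply x).2, (opC_apply x).1, (opC_apply x).2] at Ex0 Ex1 Ea0 Ea1 Ec0 Ec1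
  -- now Ex0 : (‖x‖:ℂ) * y 0 = (‖y‖:ℂ) * x 0  etc.
  set nx := ‖x‖; set ny := ‖y‖; set na := ‖opA x‖; set nc := ‖opC x‖
  have hnyC : (ny : ℂ) ≠ 0 := by exact_mod_cast hny.ne'
  have hnxC : (nx : ℂ) ≠ 0 := by exact_mod_cast hnx.ne'
  by_cases hx0 : x 0 = 0
  · -- then y 0 = 0, then x 1 = 0, then x = 0
    have hy0 : y 0 = 0 := by
      have : (nx:ℂ) * y 0 = 0 := by rw [Ex0, hx0, mul_zero]
      exact (mul_eq_zero.mp this).resolve_left hnxC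
    have hx1 : x 1 = 0 := by
      have : (ny:ℂ) * x 1 = 0 := by
        have := Ec0; rw [hy0, mul_zero, hx0] at this
        linear_combination -this
      exact (mul_eq_zero.mp this).resolve_left hnyC
    apply hx
    ext i
    fin_cases i <;> simpa [hx0, hx1]
  · -- y 0 ≠ 0, na = 2 nx, y 1 = 0, x 1 = 0, x 0 = 0
    have hy0 : y 0 ≠ 0 := by
      intro hy0
      apply hx0
      have : (ny:ℂ) * x 0 = 0 := by rw [← Ex0, hy0, mul_zero]
      exact (mul_eq_zero.mp this).resolve_left hnyC
    have hna : (na:ℂ) = 2 * nx := by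
      have : ((na:ℂ) - 2 * nx) * y 0 = 0 := by
        have h' : (nx:ℂ) * y 0 = ny * x 0 := Ex0
        linear_combination Ea0 - 2 * h'
      have h2 := (mul_eq_zero.mp this).resolve_right hy0
      linear_combination h2
    have hy1 : y 1 = 0 := by
      have : ((na:ℂ) - nx) * y 1 = 0 := by
        linear_combination Ea1 - Ex1
      have hne : (na:ℂ) - nx ≠ 0 := by
        rw [hna]
        intro hcon
        have : (nx:ℂ) = 0 := by linear_combination hcon
        exact hnxC this
      exact (mul_eq_zero.mp this).resolve_left hne
    have hx1 : x 1 = 0 := by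
      have : (ny:ℂ) * x 1 = 0 := by rw [← Ex1, hy1, mul_zero]
      exact (mul_eq_zero.mp this).resolve_left hnyC
    apply hx0
    have : (ny:ℂ) * x 0 = 0 := by
      have := Ec1; rw [hy1, mul_zero, hx1, add_zero] at this
      linear_combination -this
    exact (mul_eq_zero.mp this).resolve_left hnyC


/-- With `K = {x⊗̲y : ‖x‖‖y‖ + ‖Ax‖‖y‖ + ‖Cx‖‖y‖ ≤ 1}` for `A = [[2,0],[0,1]]` and
`C = [[2,1],[1,1]]`, the operator `T = (1/8)·I` does not belong to `conv(K)`. -/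
theorem T_not_mem_convexHull :
    ((1 / 8 : ℂ) • (1 : EuclideanSpace ℂ (Fin 2) →L[ℂ] EuclideanSpace ℂ (Fin 2))) ∉
      convexHull ℝ
        {T : EuclideanSpace ℂ (Fin 2) →L[ℂ] EuclideanSpace ℂ (Fin 2) |
          ∃ x y : EuclideanSpace ℂ (Fin 2),
            ‖x‖ * ‖y‖ + ‖opA x‖ * ‖y‖ + ‖opC x‖ * ‖y‖ ≤ 1 ∧ T = rankOne x y} := by
  intro hmem
  have hconv : Convex ℝ {S : EuclideanSpace ℂ (Fin 2) →L[ℂ] EuclideanSpace ℂ (Fin 2) |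
      phi S < 1} := convex_halfSpace_lt phi_linear 1
  have hsub : {T : EuclideanSpace ℂ (Fin 2) →L[ℂ] EuclideanSpace ℂ (Fin 2) |
          ∃ x y : EuclideanSpace ℂ (Fin 2),
            ‖x‖ * ‖y‖ + ‖opA x‖ * ‖y‖ + ‖opC x‖ * ‖y‖ ≤ 1 ∧ T = rankOne x y} ⊆
      {S | phi S < 1} := by
    rintro S ⟨x, y, hxy, rfl⟩
    show phi (rankOne x y) < 1
    rw [phi_rankOne]
    exact key_strict x y hxy
  have h1 := convexHull_min hsub hconv hmem
  rw [Set.mem_setOf_eq, phi_T] at h1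
  exact lt_irrefl 1 h1
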